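/- Let r ∈ (1,2] and let S, R be real random variables on a common probability space with S ∈ L^r, R ∈ L^r, and E(R) = 0. Then ζ_r(law(S+R), law(S)) ≤ ‖R‖_r · ‖S‖_r^{r−1} + ‖R‖_r^r, where ζ_r(μ,ν) = sup{∫f dμ − ∫f dν : f differentiable, |f'(x)−f'(y)| ≤ |x−y|^{r−1}}. -/

import Mathlib

open MeasureTheory
open scoped ENNReal

theorem zolotarev_r_one_two_perturbation
    {Ω : Type*} [MeasurableSpace Ω] (μ : Measure Ω) [IsProbabilityMeasure μ]
    (r : ℝ) (hr1 : 1 < r) (hr2 : r ≤ 2)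
    (S R : Ω → ℝ) (hS : Measurable S) (hR : Measurable R)
    (hSr : MemLp S (ENNReal.ofReal r) μ) (hRr : MemLp R (ENNReal.ofReal r) μ)
    (hR0 : ∫ ω, R ω ∂μ = 0) :
    ∀ f : ℝ → ℝ, Differentiable ℝ f →
      (∀ x y : ℝ, |deriv f x - deriv f y| ≤ |x - y| ^ (r - 1)) →
      ∫ ω, (f (S ω + R ω) - f (S ω)) ∂μ
        ≤ (eLpNorm R (ENNReal.ofReal r) μ).toReal
            * (eLpNorm S (ENNReal.ofReal r) μ).toReal ^ (r - 1)
          + (eLpNorm R (ENNReal.ofReal r) μ).toReal ^ r := by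
  intro f hf hHol
  have hr0 : (0:ℝ) < r := lt_trans one_pos hr1
  have hr10 : (0:ℝ) < r - 1 := by linarith
  set p : ENNReal := ENNReal.ofReal r with hp
  have hptoReal : p.toReal = r := ENNReal.toReal_ofReal hr0.le
  have hp_ne_zero : p ≠ 0 := by
    simp only [hp, Ne, ENNReal.ofReal_eq_zero, not_le]; exact hr0
  have hp_ne_top : p ≠ ∞ := ENNReal.ofReal_ne_top
  have hp_one : (1:ENNReal) ≤ p := by
    rw [hp, ← ENNReal.ofReal_one]; exact ENNReal.ofReal_le_ofReal hr1.le
  set q : ℝ := r / (r - 1) with hqdef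
  have hpq : r.HolderConjugate q := by
    rw [Real.holderConjugate_iff]
    refine ⟨hr1, ?_⟩
    rw [hqdef, inv_div, inv_eq_one_div, ← add_div,
      show 1 + (r - 1) = r by ring, div_self hr0.ne']
  set g : ℝ → ℝ := deriv f with hg
  have hgc : Measurable g := measurable_deriv f
  have hd : ∀ x, HasDerivAt f (g x) x := fun x => (hf x).hasDerivAt
  -- pointwise Taylor bound
  have key2 : ∀ a b : ℝ, |f (a + b) - f a - b * g a| ≤ |b| ^ r := by
    intro a b
    have hφ : ∀ t : ℝ, HasDerivAt (fun t => f (a + t * b) - t * (b * g a))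
        (g (a + t * b) * b - b * g a) t := by
      intro t
      have h1 : HasDerivAt (fun t : ℝ => a + t * b) b t := by
        simpa using ((hasDerivAt_id t).mul_const b).const_add a
      have h2 := (hd (a + t * b)).comp t h1
      have h3 : HasDerivAt (fun t : ℝ => t * (b * g a)) (b * g a) t := by
        simpa using (hasDerivAt_id t).mul_const (b * g a)
      exact h2.sub h3
    have bound : ∀ t ∈ Set.Icc (0:ℝ) 1, ‖g (a + t * b) * b - b * g a‖ ≤ |b| ^ r := by
      intro t ht
      have h1 : g (a + t * b) * b - b * g a = b * (g (a + t * b) - g a) := by ring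
      rw [h1, Real.norm_eq_abs, abs_mul]
      have h2 : |g (a + t * b) - g a| ≤ |t * b| ^ (r - 1) := by
        have := hHol (a + t * b) a
        simpa using this
      have h3 : |t * b| ≤ |b| := by
        rw [abs_mul]
        calc |t| * |b| ≤ 1 * |b| := by
              exact mul_le_mul_of_nonneg_right (abs_le.2 ⟨by linarith [ht.1], ht.2⟩) (abs_nonneg b)
          _ = |b| := one_mul _
      have h4 : |t * b| ^ (r - 1) ≤ |b| ^ (r - 1) :=
        Real.rpow_le_rpow (abs_nonneg _) h3 hr10.le
      calc |b| * |g (a + t * b) - g a| ≤ |b| * |b| ^ (r - 1) :=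
            mul_le_mul_of_nonneg_left (h2.trans h4) (abs_nonneg b)
        _ = |b| ^ r := by
            rw [← Real.rpow_one_add' (abs_nonneg b) (by linarith : 1 + (r - 1) ≠ 0)]
            norm_num
    have hmvt := Convex.norm_image_sub_le_of_norm_hasDerivWithin_le
      (f := fun t => f (a + t * b) - t * (b * g a))
      (f' := fun t => g (a + t * b) * b - b * g a)
      (fun t _ => (hφ t).hasDerivWithinAt) bound (convex_Icc 0 1)
      (Set.left_mem_Icc.2 zero_le_one) (Set.right_mem_Icc.2 zero_le_one)
    have : ‖(f (a + 1 * b) - 1 * (b * g a)) - (f (a + 0 * b) - 0 * (b * g a))‖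
        ≤ |b| ^ r * ‖(1:ℝ) - 0‖ := hmvt
    have h7 : |f (a + b) - b * g a - f a| ≤ |b| ^ r := by
      simpa [Real.norm_eq_abs] using this
    have h8 : f (a + b) - b * g a - f a = f (a + b) - f a - b * g a := by ring
    rwa [h8] at h7
  have key : ∀ a b : ℝ, f (a + b) - f a ≤ b * g a + |b| ^ r := by
    intro a b
    have := (abs_le.1 (key2 a b)).2
    linarith
  -- Hölder bound on g
  have hgb : ∀ x : ℝ, |g x - g 0| ≤ |x| ^ (r - 1) := by
    intro x; simpa using hHol x 0
  -- integrability facts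
  have hRint : Integrable R μ := hRr.integrable hp_one
  have hIRr : Integrable (fun ω => |R ω| ^ r) μ := by
    have := hRr.integrable_norm_rpow hp_ne_zero hp_ne_top
    simpa [hptoReal, Real.norm_eq_abs] using this
  have hRnorm : MemLp (fun ω => |R ω|) p μ := by
    simpa [Real.norm_eq_abs] using hRr.norm
  have hSm : MemLp (fun ω => |S ω| ^ (r - 1)) (ENNReal.ofReal q) μ := by
    have h1 := hSr.norm_rpow_div (ENNReal.ofReal (r - 1))
    have h2 : (ENNReal.ofReal (r - 1)).toReal = r - 1 := ENNReal.toReal_ofReal hr10.le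
    have h3 : ENNReal.ofReal q = p / ENNReal.ofReal (r - 1) := by
      rw [hqdef, ENNReal.ofReal_div_of_pos hr10, hp]
    rw [h3]
    simpa [h2, Real.norm_eq_abs] using h1
  have hconj_enn : 1 / (1:ENNReal) = 1 / p + 1 / ENNReal.ofReal q := by
    simp only [one_div, inv_one]
    exact (hpq.inv_add_inv_ennreal).symm
  have hmulInt : Integrable (fun ω => |R ω| * |S ω| ^ (r - 1)) μ := by
    have := (hSm.smul (hRnorm) (hpqr := ⟨by simpa only [one_div] using hconj_enn.symm⟩) : MemLp
      ((fun ω => |R ω|) • (fun ω => |S ω| ^ (r - 1))) 1 μ)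
    exact memLp_one_iff_integrable.mp (by simpa [Pi.smul_apply, smul_eq_mul, Pi.mul_def] using this)
  -- integrals of interest
  set IR : ℝ := ∫ ω, |R ω| ^ r ∂μ with hIRdef
  set IS : ℝ := ∫ ω, |S ω| ^ r ∂μ with hISdef
  have hIR0 : 0 ≤ IR := integral_nonneg fun ω => by positivity
  have hIS0 : 0 ≤ IS := integral_nonneg fun ω => by positivity
  -- Hölder's inequality
  have hHolder : ∫ ω, |R ω| * |S ω| ^ (r - 1) ∂μ ≤ IR ^ (1 / r) * IS ^ (1 / q) := by
    have h := integral_mul_le_Lp_mul_Lq_of_nonneg hpq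
      (Filter.Eventually.of_forall fun ω => abs_nonneg (R ω))
      (Filter.Eventually.of_forall fun ω => Real.rpow_nonneg (abs_nonneg (S ω)) _)
      hRnorm hSm
    have hpow : ∀ ω, (|S ω| ^ (r - 1)) ^ q = |S ω| ^ r := by
      intro ω
      rw [← Real.rpow_mul (abs_nonneg _), hpq.sub_one_mul_conj]
    have habs : ∀ ω, |R ω| ^ r = |R ω| ^ r := fun _ => rfl
    calc ∫ ω, |R ω| * |S ω| ^ (r - 1) ∂μ
        ≤ (∫ ω, |R ω| ^ r ∂μ) ^ (1 / r) * (∫ ω, (|S ω| ^ (r - 1)) ^ q ∂μ) ^ (1 / q) := h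
      _ = IR ^ (1 / r) * IS ^ (1 / q) := by
          simp_rw [hpow]
          rfl
  -- integrability of the main pieces
  have hgS_meas : Measurable fun ω => g (S ω) := hgc.comp hS
  have hRg1 : Integrable (fun ω => R ω * (g (S ω) - g 0)) μ := by
    refine hmulInt.mono' ((hR.mul (hgS_meas.sub measurable_const)).aestronglyMeasurable) ?_
    refine Filter.Eventually.of_forall fun ω => ?_
    rw [Real.norm_eq_abs, abs_mul]
    exact mul_le_mul_of_nonneg_left (hgb (S ω)) (abs_nonneg _)
  have hRg0 : Integrable (fun ω => R ω * g 0) μ := hRint.mul_const _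
  have hRg : Integrable (fun ω => R ω * g (S ω)) μ := by
    have h1 : (fun ω => R ω * g (S ω)) = fun ω => R ω * g 0 + R ω * (g (S ω) - g 0) := by
      funext ω; ring
    rw [h1]; exact hRg0.add hRg1
  have hBint : Integrable (fun ω => R ω * g (S ω) + |R ω| ^ r) μ := hRg.add hIRr
  have hAint : Integrable (fun ω => f (S ω + R ω) - f (S ω)) μ := by
    refine (((hRint.abs.mul_const (|g 0|)).add hmulInt).add hIRr).mono'
      (((hf.continuous.measurable.comp (hS.add hR)).sub
        (hf.continuous.measurable.comp hS)).aestronglyMeasurable) ?_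
    refine Filter.Eventually.of_forall fun ω => ?_
    have h2 : |f (S ω + R ω) - f (S ω) - R ω * g (S ω)| ≤ |R ω| ^ r := key2 (S ω) (R ω)
    have h3 : |f (S ω + R ω) - f (S ω)| ≤ |R ω * g (S ω)| + |R ω| ^ r := by
      have h4 := abs_add_le (f (S ω + R ω) - f (S ω) - R ω * g (S ω)) (R ω * g (S ω))
      simp only [sub_add_cancel] at h4
      linarith
    have h5 : |g (S ω)| ≤ |g 0| + |S ω| ^ (r - 1) := by
      have h6 := abs_add_le (g (S ω) - g 0) (g 0)
      simp only [sub_add_cancel] at h6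
      have := hgb (S ω)
      linarith
    have h7 : |R ω * g (S ω)| ≤ |R ω| * |g 0| + |R ω| * |S ω| ^ (r - 1) := by
      rw [abs_mul, ← mul_add]
      exact mul_le_mul_of_nonneg_left h5 (abs_nonneg _)
    rw [Real.norm_eq_abs]
    simp only [Pi.add_apply]
    linarith
  -- main inequality chain
  have step1 : ∫ ω, (f (S ω + R ω) - f (S ω)) ∂μ
      ≤ ∫ ω, (R ω * g (S ω) + |R ω| ^ r) ∂μ :=
    integral_mono hAint hBint fun ω => key (S ω) (R ω)
  have step2 : ∫ ω, (R ω * g (S ω) + |R ω| ^ r) ∂μ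
      = ∫ ω, R ω * g (S ω) ∂μ + IR := integral_add hRg hIRr
  have step3 : ∫ ω, R ω * g (S ω) ∂μ = ∫ ω, R ω * (g (S ω) - g 0) ∂μ := by
    have h1 : (fun ω => R ω * g (S ω)) = fun ω => R ω * g 0 + R ω * (g (S ω) - g 0) := by
      funext ω; ring
    rw [h1, integral_add hRg0 hRg1, integral_mul_const, hR0, zero_mul, zero_add]
  have step4 : ∫ ω, R ω * (g (S ω) - g 0) ∂μ ≤ ∫ ω, |R ω| * |S ω| ^ (r - 1) ∂μ := by
    refine integral_mono hRg1 hmulInt fun ω => ?_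
    calc R ω * (g (S ω) - g 0) ≤ |R ω * (g (S ω) - g 0)| := le_abs_self _
      _ = |R ω| * |g (S ω) - g 0| := abs_mul _ _
      _ ≤ |R ω| * |S ω| ^ (r - 1) := mul_le_mul_of_nonneg_left (hgb (S ω)) (abs_nonneg _)
  -- translate eLpNorms
  have hReq : (eLpNorm R p μ).toReal = IR ^ r⁻¹ := by
    rw [hRr.eLpNorm_eq_integral_rpow_norm hp_ne_zero hp_ne_top]
    rw [ENNReal.toReal_ofReal (by positivity)]
    simp_rw [hptoReal, Real.norm_eq_abs]
    rfl
  have hSeq : (eLpNorm S p μ).toReal = IS ^ r⁻¹ := by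
    rw [hSr.eLpNorm_eq_integral_rpow_norm hp_ne_zero hp_ne_top]
    rw [ENNReal.toReal_ofReal (by positivity)]
    simp_rw [hptoReal, Real.norm_eq_abs]
    rfl
  have hfin1 : (IS ^ r⁻¹) ^ (r - 1) = IS ^ (1 / q) := by
    rw [← Real.rpow_mul hIS0]
    congr 1
    rw [hqdef, one_div_div, inv_mul_eq_div]
  have hfin2 : (IR ^ r⁻¹) ^ r = IR := by
    rw [← Real.rpow_mul hIR0, inv_mul_cancel₀ hr0.ne', Real.rpow_one]
  rw [hReq, hSeq, hfin1, hfin2]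
  have hfin3 : IR ^ r⁻¹ = IR ^ (1 / r) := by rw [one_div]
  calc ∫ ω, (f (S ω + R ω) - f (S ω)) ∂μ
      ≤ ∫ ω, R ω * g (S ω) ∂μ + IR := step1.trans (le_of_eq step2)
    _ = ∫ ω, R ω * (g (S ω) - g 0) ∂μ + IR := by rw [step3]
    _ ≤ ∫ ω, |R ω| * |S ω| ^ (r - 1) ∂μ + IR := by linarith
    _ ≤ IR ^ (1 / r) * IS ^ (1 / q) + IR := by linarith
    _ = IR ^ r⁻¹ * IS ^ (1 / q) + IR := by rw [hfin3]
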